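/- Let p ∈ [1,∞). The ball measure of non-compactness of the identity embedding I : ℓ^p → ℓ^∞ equals exactly 2^{−1/p}: for every ρ > 2^{−1/p} the closed unit ball of ℓ^p can be covered by finitely many balls in ℓ^∞ of radius ρ, while for every ρ < 2^{−1/p}, every m ∈ ℕ and all y^1,…,y^m ∈ ℓ^∞ there exists x ∈ ℓ^p with ‖x‖_{ℓ^p} ≤ 1 such that ‖x − y^k‖_{ℓ^∞} ≥ ρ for all k = 1,…,m. -/

import Mathlib

open scoped ENNReal NNReal

/-- The `ℓ^p` (quasi)norm of a real sequence, `(∑_j |x_j|^p)^{1/p}`, valued in `ℝ≥0∞`. -/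
noncomputable def seqLpNorm (p : ℝ) (x : ℕ → ℝ) : ℝ≥0∞ :=
  (∑' j, (‖x j‖₊ : ℝ≥0∞) ^ p) ^ (1 / p)

/-- The `ℓ^∞` norm of a real sequence, `sup_j |x_j|`, valued in `ℝ≥0∞`. -/
noncomputable def seqSupNorm (x : ℕ → ℝ) : ℝ≥0∞ :=
  ⨆ j, (‖x j‖₊ : ℝ≥0∞)

lemma key_mean {p : ℝ} (hp : 1 ≤ p) {a b : ℝ} (ha : 0 ≤ a) (hb : 0 ≤ b)
    (hab : a ^ p + b ^ p ≤ 1) : a + b ≤ 2 * (2 : ℝ) ^ (-(1 / p)) := by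
  have hp0 : 0 < p := lt_of_lt_of_le one_pos hp
  have h := Real.rpow_arith_mean_le_arith_mean_rpow (Finset.univ : Finset (Fin 2))
      ![1/2, 1/2] ![a, b] (by intro i _; fin_cases i <;> norm_num)
      (by simp [Fin.sum_univ_two]; norm_num) (by intro i _; fin_cases i <;> simpa) hp
  simp only [Fin.sum_univ_two, Matrix.cons_val_zero, Matrix.cons_val_one, Matrix.head_cons] at h
  have h2 : (1/2 * a + 1/2 * b) ^ p ≤ 1/2 := by
    calc (1/2 * a + 1/2 * b) ^ p ≤ 1/2 * a ^ p + 1/2 * b ^ p := h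
    _ ≤ 1/2 := by linarith
  have h3 : (1/2 * a + 1/2 * b) ≤ (1/2 : ℝ) ^ (1/p) := by
    have hnn : (0:ℝ) ≤ 1/2 * a + 1/2 * b := by linarith
    calc (1/2 * a + 1/2 * b) = (((1/2 * a + 1/2 * b)) ^ p) ^ (1/p) := by
          rw [← Real.rpow_mul hnn, mul_one_div, div_self hp0.ne', Real.rpow_one]
    _ ≤ (1/2 : ℝ) ^ (1/p) := Real.rpow_le_rpow (Real.rpow_nonneg hnn p) h2 (by positivity)
  have h4 : ((1:ℝ)/2) ^ (1/p) = (2:ℝ) ^ (-(1/p)) := by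
    rw [one_div (2:ℝ), Real.inv_rpow (by norm_num), ← Real.rpow_neg (by norm_num)]
  linarith [h3, h4.symm.le]

/-- For `p ∈ [1,∞)`, the ball measure of non-compactness of the identity
embedding `I : ℓ^p → ℓ^∞` equals `2^{−1/p}`: for every `ρ > 2^{−1/p}` the unit ball of
`ℓ^p` is covered by finitely many balls in `ℓ^∞` of radius `ρ`, while for every
`ρ < 2^{−1/p}` no finite family of balls in `ℓ^∞` of radius `ρ` covers it. -/
theorem lp_into_linfty_measure_of_noncompactness (p : ℝ) (hp : 1 ≤ p) :
    (∀ ρ : ℝ≥0∞, (2 : ℝ≥0∞) ^ (-(1 / p)) < ρ →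
      ∃ (m : ℕ) (y : Fin m → ℕ → ℝ), (∀ k, seqSupNorm (y k) < ∞) ∧
        ∀ x : ℕ → ℝ, seqLpNorm p x ≤ 1 →
          ∃ k, seqSupNorm (fun j => x j - y k j) ≤ ρ) ∧
    (∀ ρ : ℝ≥0∞, ρ < (2 : ℝ≥0∞) ^ (-(1 / p)) →
      ∀ (m : ℕ) (y : Fin m → ℕ → ℝ), (∀ k, seqSupNorm (y k) < ∞) →
        ∃ x : ℕ → ℝ, seqLpNorm p x ≤ 1 ∧
          ∀ k, ρ ≤ seqSupNorm (fun j => x j - y k j)) := by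
  classical
  have hp0 : 0 < p := lt_of_lt_of_le one_pos hp
  have hp0' : p ≠ 0 := hp0.ne'
  set c : ℝ := (2:ℝ) ^ (-(1/p)) with hcdef
  have hc_pos : 0 < c := Real.rpow_pos_of_pos two_pos _
  have hc_lt1 : c < 1 := Real.rpow_lt_one_of_one_lt_of_neg one_lt_two (by
    have : 0 < 1/p := by positivity
    linarith)
  have hcp : c ^ p = 1/2 := by
    rw [hcdef, ← Real.rpow_mul (by norm_num : (0:ℝ) ≤ 2), neg_mul, one_div,
      inv_mul_cancel₀ hp0', Real.rpow_neg (by norm_num), Real.rpow_one]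
    norm_num
  have hE : (2 : ℝ≥0∞) ^ (-(1 / p)) = ENNReal.ofReal c := by
    rw [hcdef, ← ENNReal.ofReal_rpow_of_pos (by norm_num : (0:ℝ) < 2), ENNReal.ofReal_ofNat]
  constructor
  · -- upper bound
    intro ρ hρ
    by_cases hρtop : ρ = ⊤
    · refine ⟨1, fun _ _ => 0, ?_, ?_⟩
      · intro k
        simp [seqSupNorm]
      · intro x hx
        exact ⟨0, by simp [hρtop]⟩
    · set R := ρ.toReal with hRdef
      have hcR : c < R := by
        rw [hE] at hρ
        exact (ENNReal.ofReal_lt_iff_lt_toReal hc_pos.le hρtop).mp hρ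
      set δ : ℝ := (R - c)/2 with hδdef
      have hδ : 0 < δ := by rw [hδdef]; linarith
      set N : ℕ := ⌈2/δ⌉₊ with hN
      refine ⟨N + 1, fun i _ => (i : ℕ) * δ - 1, ?_, ?_⟩
      · intro k
        have : seqSupNorm (fun _ : ℕ => ((k : ℕ) : ℝ) * δ - 1)
            = (‖(((k : ℕ) : ℝ) * δ - 1 : ℝ)‖₊ : ℝ≥0∞) := by
          rw [seqSupNorm, iSup_const]
        rw [this]
        exact ENNReal.coe_lt_top
      · intro x hx
        have hS : (∑' j, (‖x j‖₊ : ℝ≥0∞) ^ p) ≤ 1 := by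
          rw [seqLpNorm] at hx
          have h := ENNReal.rpow_le_rpow hx hp0.le
          rwa [← ENNReal.rpow_mul, one_div, inv_mul_cancel₀ hp0', ENNReal.rpow_one,
            ENNReal.one_rpow] at h
        have hxj : ∀ j, (‖x j‖₊ : ℝ≥0∞) ≤ 1 := by
          intro j
          have h1 : (‖x j‖₊ : ℝ≥0∞) ^ p ≤ 1 := le_trans (ENNReal.le_tsum j) hS
          have h2 := ENNReal.rpow_le_rpow h1 (le_of_lt (by positivity : (0:ℝ) < 1/p))
          rwa [← ENNReal.rpow_mul, mul_one_div, div_self hp0', ENNReal.rpow_one,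
            ENNReal.one_rpow] at h2
        have hxj1 : ∀ j, |x j| ≤ 1 := by
          intro j
          have := hxj j
          rw [← enorm_eq_nnnorm, Real.enorm_eq_ofReal_abs] at this
          exact (ENNReal.ofReal_le_one).mp this
        set V := seqSupNorm x with hVdef
        have hV1 : V ≤ 1 := by
          rw [hVdef, seqSupNorm]; exact iSup_le hxj
        have hVtop : V ≠ ⊤ := (lt_of_le_of_lt hV1 ENNReal.one_lt_top).ne
        set v := V.toReal with hvdef
        have hjv : ∀ j, |x j| ≤ v := by
          intro j
          have hle : (‖x j‖₊ : ℝ≥0∞) ≤ V := by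
            rw [hVdef, seqSupNorm]; exact le_iSup (fun j => ((‖x j‖₊ : ℝ≥0∞))) j
          have := ENNReal.toReal_mono hVtop hle
          simpa [Real.norm_eq_abs] using this
        obtain ⟨j₀, hj₀⟩ : ∃ j₀, v - δ < |x j₀| := by
          by_contra hcon
          push_neg at hcon
          have h0 : (0:ℝ) ≤ v - δ := le_trans (abs_nonneg (x 0)) (hcon 0)
          have hle : V ≤ ENNReal.ofReal (v - δ) := by
            rw [hVdef, seqSupNorm]
            refine iSup_le fun j => ?_
            rw [← enorm_eq_nnnorm, Real.enorm_eq_ofReal_abs]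
            exact ENNReal.ofReal_le_ofReal (hcon j)
          have h2 := ENNReal.toReal_mono ENNReal.ofReal_ne_top hle
          rw [ENNReal.toReal_ofReal h0] at h2
          rw [← hvdef] at h2
          linarith
        set w := |x j₀| with hwdef
        have hw0 : 0 ≤ w := abs_nonneg _
        have hw1 : w ≤ 1 := hxj1 j₀
        have hvw : v ≤ w + δ := by linarith
        have hpair : ∀ j, j ≠ j₀ → |x j| ^ p + w ^ p ≤ 1 := by
          intro j hj
          have hfin : ∀ i : ℕ, (‖x i‖₊ : ℝ≥0∞) ^ p ≠ ⊤ :=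
            fun i => (ENNReal.rpow_lt_top_of_nonneg hp0.le ENNReal.coe_ne_top).ne
          have hsum : (‖x j‖₊ : ℝ≥0∞) ^ p + (‖x j₀‖₊ : ℝ≥0∞) ^ p ≤ 1 := by
            have h0 : ∑ i ∈ ({j, j₀} : Finset ℕ), (‖x i‖₊ : ℝ≥0∞) ^ p ≤ 1 :=
              le_trans (ENNReal.sum_le_tsum _) hS
            rwa [Finset.sum_pair hj] at h0
          have h2 := ENNReal.toReal_mono (by simp) hsum
          rw [ENNReal.toReal_add (hfin j) (hfin j₀), ENNReal.toReal_one,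
            ← ENNReal.toReal_rpow, ← ENNReal.toReal_rpow] at h2
          simpa [Real.norm_eq_abs] using h2
        set s : ℝ := (1 - w ^ p) ^ (1/p) with hsdef
        have hwp1 : w ^ p ≤ 1 := Real.rpow_le_one hw0 hw1 hp0.le
        have hs0 : 0 ≤ s := Real.rpow_nonneg (by linarith) _
        have hsp : s ^ p = 1 - w ^ p := by
          rw [hsdef, ← Real.rpow_mul (by linarith), one_div, inv_mul_cancel₀ hp0',
            Real.rpow_one]
        have hws : w + s ≤ 2 * c := by
          rw [hcdef]
          exact key_mean hp hw0 hs0 (by rw [hsp]; linarith)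
        have hwc : w ≤ s → w ≤ c := fun h => by linarith
        have hothers : ∀ j, j ≠ j₀ → |x j| ≤ s := by
          intro j hj
          have h1 : |x j| ^ p ≤ 1 - w ^ p := by linarith [hpair j hj]
          calc |x j| = (|x j| ^ p) ^ (1/p) := by
                rw [← Real.rpow_mul (abs_nonneg _), mul_one_div, div_self hp0', Real.rpow_one]
          _ ≤ (1 - w ^ p) ^ (1/p) :=
                Real.rpow_le_rpow (Real.rpow_nonneg (abs_nonneg _) _) h1 (by positivity)
        set σ : ℝ := if 0 ≤ x j₀ then 1 else -1 with hσdef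
        have hσx : x j₀ = σ * w := by
          rw [hσdef, hwdef]
          split_ifs with h
          · rw [abs_of_nonneg h]; ring
          · rw [abs_of_neg (lt_of_not_ge h)]; ring
        have hσ1 : |σ| = 1 := by rw [hσdef]; split_ifs <;> simp
        set u : ℝ := max 0 ((w - s)/2) with hudef
        have hu0 : 0 ≤ u := le_max_left _ _
        have huw : u ≤ w := by
          rcases le_total ((w-s)/2) 0 with h | h
          · rw [hudef, max_eq_left h]; exact hw0
          · rw [hudef, max_eq_right h]; linarith
        have hu1 : u ≤ 1 := le_trans huw hw1
        set t₀ : ℝ := σ * u with ht₀def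
        have ht₀u : |t₀| = u := by
          rw [ht₀def, abs_mul, hσ1, one_mul, abs_of_nonneg hu0]
        have ht₀abs : |t₀| ≤ 1 := by rw [ht₀u]; exact hu1
        have hcoord : ∀ j, |x j - t₀| ≤ c + δ := by
          intro j
          by_cases hj : j = j₀
          · subst hj
            rw [hσx, ht₀def, ← mul_sub, abs_mul, hσ1, one_mul,
              abs_of_nonneg (by linarith : (0:ℝ) ≤ w - u)]
            rcases le_or_gt ((w-s)/2) 0 with h | h
            · have hu : u = 0 := by rw [hudef, max_eq_left h]
              have hwc' : w ≤ c := hwc (by linarith)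
              rw [hu]; linarith
            · have hu : u = (w-s)/2 := by rw [hudef, max_eq_right h.le]
              rw [hu]; linarith
          · have h1 : |x j - t₀| ≤ |x j| + |t₀| := by
              have h2 := abs_add_le (x j) (-t₀)
              rw [abs_neg] at h2
              rw [sub_eq_add_neg]
              exact h2
            rcases le_or_gt ((w-s)/2) 0 with h | h
            · have hu : u = 0 := by rw [hudef, max_eq_left h]
              have hwc' : w ≤ c := hwc (by linarith)
              have h3 : |x j| ≤ v := hjv j
              rw [ht₀u, hu] at h1
              linarith
            · have hu : u = (w-s)/2 := by rw [hudef, max_eq_right h.le]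
              have h3 : |x j| ≤ s := hothers j hj
              rw [ht₀u, hu] at h1
              linarith
        have ht₀1 : -1 ≤ t₀ := neg_le_of_abs_le ht₀abs
        have ht₀2 : t₀ ≤ 1 := le_of_abs_le ht₀abs
        set i : ℕ := ⌊(t₀ + 1)/δ⌋₊ with hidef
        have hiN : i < N + 1 := by
          have h1 : (t₀ + 1)/δ ≤ 2/δ := by
            apply div_le_div_of_nonneg_right (by linarith) hδ.le
          have h2 : i ≤ ⌊2/δ⌋₊ := Nat.floor_mono h1
          have h3 : ⌊2/δ⌋₊ ≤ ⌈2/δ⌉₊ := Nat.floor_le_ceil _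
          omega
        refine ⟨⟨i, hiN⟩, ?_⟩
        have htfloor1 : (i:ℝ) ≤ (t₀ + 1)/δ :=
          Nat.floor_le (div_nonneg (by linarith) hδ.le)
        have htfloor2 : (t₀ + 1)/δ < i + 1 := Nat.lt_floor_add_one _
        set t : ℝ := (i:ℝ) * δ - 1 with htdef
        have htle : t ≤ t₀ := by
          have := (le_div_iff₀ hδ).mp htfloor1
          rw [htdef]; linarith
        have htgt : t₀ - t < δ := by
          have h4 := (div_lt_iff₀ hδ).mp htfloor2
          have h5 : ((i:ℝ)+1)*δ = (i:ℝ)*δ + δ := by ring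
          rw [htdef]; linarith
        rw [seqSupNorm]
        refine iSup_le fun j => ?_
        have hb : |x j - ((((⟨i, hiN⟩ : Fin (N+1)) : ℕ) : ℝ) * δ - 1)| ≤ R := by
          have h1 : |x j - t| ≤ |x j - t₀| + |t₀ - t| := abs_sub_le _ _ _
          have h2 : |t₀ - t| ≤ δ := by rw [abs_of_nonneg (by linarith)]; linarith
          have h3 := hcoord j
          have h4 : c + 2*δ = R := by rw [hδdef]; ring
          have h5 : ((⟨i, hiN⟩ : Fin (N+1)) : ℕ) = i := rfl
          rw [h5, ← htdef]
          linarith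
        rw [← enorm_eq_nnnorm, Real.enorm_eq_ofReal_abs]
        calc ENNReal.ofReal _ ≤ ENNReal.ofReal R := ENNReal.ofReal_le_ofReal hb
        _ = ρ := by rw [hRdef]; exact ENNReal.ofReal_toReal hρtop
  · -- lower bound
    intro ρ hρ m y hy
    rw [hE] at hρ
    have hρtop : ρ ≠ ⊤ := hρ.ne_top
    set R := ρ.toReal with hRdef
    have hRc : R < c := (ENNReal.lt_ofReal_iff_toReal_lt hρtop).mp hρ
    set ε : ℝ := c - R with hεdef
    have hε : 0 < ε := by rw [hεdef]; linarith
    set C : Fin m → ℝ := fun k => (seqSupNorm (y k)).toReal with hCdef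
    have hC : ∀ k j, |y k j| ≤ C k := by
      intro k j
      have hle : (‖y k j‖₊ : ℝ≥0∞) ≤ seqSupNorm (y k) := by
        rw [seqSupNorm]; exact le_iSup (fun j => ((‖y k j‖₊ : ℝ≥0∞))) j
      have := ENNReal.toReal_mono (hy k).ne hle
      simpa [Real.norm_eq_abs] using this
    obtain ⟨a, b, hab, hfab⟩ : ∃ a b : ℕ, a ≠ b ∧
        ∀ k, ⌊y k a / ε⌋ = ⌊y k b / ε⌋ := by
      set f : ℕ → ∀ k : Fin m, Set.Icc (⌊(-(C k))/ε⌋) (⌊(C k)/ε⌋) := fun j k =>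
        ⟨⌊y k j / ε⌋, ⟨Int.floor_le_floor (by
            apply div_le_div_of_nonneg_right ?_ hε.le
            exact neg_le_of_abs_le (hC k j)),
          Int.floor_le_floor (by
            apply div_le_div_of_nonneg_right ?_ hε.le
            exact le_of_abs_le (hC k j))⟩⟩ with hfdef
      obtain ⟨a, b, hab, hfab⟩ := Finite.exists_ne_map_eq_of_infinite f
      refine ⟨a, b, hab, fun k => ?_⟩
      have := congrFun hfab k
      exact Subtype.ext_iff.mp this
    have hclose : ∀ k, |y k a - y k b| < ε := by
      intro k
      have h1 := Int.floor_le (y k a / ε)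
      have h2 := Int.lt_floor_add_one (y k a / ε)
      have h3 := Int.floor_le (y k b / ε)
      have h4 := Int.lt_floor_add_one (y k b / ε)
      rw [hfab k] at h1 h2
      have ha' : y k a = y k a / ε * ε := (div_mul_cancel₀ _ hε.ne').symm
      have hb' : y k b = y k b / ε * ε := (div_mul_cancel₀ _ hε.ne').symm
      rw [abs_lt]
      constructor <;> nlinarith [h1, h2, h3, h4, hε]
    set x : ℕ → ℝ := fun j => if j = a then c else if j = b then -c else 0 with hxdef
    have hxa : x a = c := by rw [hxdef]; simp
    have hxb : x b = -c := by rw [hxdef]; simp [hab.symm]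
    refine ⟨x, ?_, ?_⟩
    · rw [seqLpNorm]
      have hsupp : ∀ j ∉ ({a, b} : Finset ℕ), (‖x j‖₊ : ℝ≥0∞) ^ p = 0 := by
        intro j hj
        simp only [Finset.mem_insert, Finset.mem_singleton, not_or] at hj
        rw [hxdef]
        simp only [if_neg hj.1, if_neg hj.2]
        rw [nnnorm_zero, ENNReal.coe_zero, ENNReal.zero_rpow_of_pos hp0]
      rw [tsum_eq_sum hsupp, Finset.sum_pair hab, hxa, hxb]
      have hterm : (‖c‖₊ : ℝ≥0∞) ^ p = ENNReal.ofReal (1/2) := by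
        rw [← enorm_eq_nnnorm, Real.enorm_eq_ofReal hc_pos.le, ENNReal.ofReal_rpow_of_pos hc_pos, hcp]
      have hsum : (‖c‖₊ : ℝ≥0∞) ^ p + (‖(-c : ℝ)‖₊ : ℝ≥0∞) ^ p = 1 := by
        rw [nnnorm_neg, hterm, ← ENNReal.ofReal_add (by norm_num) (by norm_num)]
        norm_num
      rw [hsum, ENNReal.one_rpow]
    · intro k
      have key : R ≤ |c - y k a| ∨ R ≤ |(-c) - y k b| := by
        by_contra hcon
        push_neg at hcon
        obtain ⟨h1, h2⟩ := hcon
        rw [abs_lt] at h1 h2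
        have h3 := hclose k
        rw [abs_lt] at h3
        rw [hεdef] at h3
        have := h3.2
        linarith [h1.2, h2.1]
      rw [seqSupNorm]
      rcases key with h | h
      · refine le_trans ?_ (le_iSup (fun j => ((‖x j - y k j‖₊ : ℝ≥0∞))) a)
        rw [hxa, ← enorm_eq_nnnorm, Real.enorm_eq_ofReal_abs, ← ENNReal.ofReal_toReal hρtop]
        exact ENNReal.ofReal_le_ofReal h
      · refine le_trans ?_ (le_iSup (fun j => ((‖x j - y k j‖₊ : ℝ≥0∞))) b)
        rw [hxb, ← enorm_eq_nnnorm, Real.enorm_eq_ofReal_abs, ← ENNReal.ofReal_toReal hρtop]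
        exact ENNReal.ofReal_le_ofReal h
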